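/- Let p > 1 and let u = u^λ be the unique minimizer of G. If f_i < f_{i+1} < … < f_{i+r} (the data is strictly increasing on a block of indices), then u_i ≤ u_{i+1} ≤ … ≤ u_{i+r}. -/

import Mathlib

/-- Predecessor index: `i - 1` (and `0` maps to `0`). -/
def pred {k : ℕ} (i : Fin k) : Fin k :=
  ⟨i.val - 1, Nat.lt_of_le_of_lt (Nat.sub_le _ _) i.isLt⟩

/-- The discrete energy `G(v) = ∑_{i≥2} |v_i - v_{i-1}| + λ ∑_i L_i |f_i - v_i|^p`
(indices written with `Fin k`, i.e. `0,…,k-1`). -/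
noncomputable def G (k : ℕ) (lam p : ℝ) (L f : Fin k → ℝ) (v : Fin k → ℝ) : ℝ :=
  (∑ i : Fin k, if i.val = 0 then 0 else |v i - v (pred i)|) +
    lam * ∑ i : Fin k, L i * |f i - v i| ^ p

/-- where the data `f` is strictly increasing on a block of indices,
the minimizer is nondecreasing on that block. -/
theorem stmt16 (k : ℕ) (lam p : ℝ) (hlam : 0 < lam) (hp : 1 < p)
    (L f : Fin k → ℝ) (hL : ∀ i, 0 < L i)
    (u : Fin k → ℝ) (hu : ∀ v : Fin k → ℝ, G k lam p L f u ≤ G k lam p L f v)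
    (i r : ℕ) (hir : i + r < k)
    (hf : ∀ j (_h1 : i ≤ j) (_h2 : j < i + r), f ⟨j, by omega⟩ < f ⟨j + 1, by omega⟩) :
    ∀ j (_h1 : i ≤ j) (_h2 : j < i + r), u ⟨j, by omega⟩ ≤ u ⟨j + 1, by omega⟩ := by
  intro j hj1 hj2
  by_contra hcon
  push_neg at hcon
  have hjk : j < k := by omega
  have hjk1 : j + 1 < k := by omega
  set J : Fin k := ⟨j, hjk⟩ with hJdef
  set J1 : Fin k := ⟨j + 1, hjk1⟩ with hJ1def
  have hJval : J.val = j := rfl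
  have hJ1val : J1.val = j + 1 := rfl
  have hJJ1 : J ≠ J1 := Fin.ne_of_val_ne (by omega)
  have hba : u J1 < u J := hcon
  have hgh : f J < f J1 := hf j hj1 hj2
  set c : ℝ := max (u J1) (min (u J) (f J)) with hc
  have hbc : u J1 ≤ c := le_max_left _ _
  have hca : c ≤ u J := max_le hba.le (min_le_left _ _)
  -- fidelity inequalities for the projection c
  have habs : |f J - c| ≤ |f J - u J| ∧ |f J1 - c| ≤ |f J1 - u J1| ∧
      (|f J - c| < |f J - u J| ∨ |f J1 - c| < |f J1 - u J1|) := by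
    rcases le_or_gt (f J) (u J1) with hgb | hbg
    · have hcb : c = u J1 := by
        rw [hc, min_eq_right (by linarith : f J ≤ u J), max_eq_left hgb]
      rw [hcb]
      have h1 : |f J - u J1| < |f J - u J| := by
        rw [abs_of_nonpos (by linarith), abs_of_nonpos (by linarith)]
        linarith
      exact ⟨h1.le, le_rfl, Or.inl h1⟩
    · have hcm : c = min (u J) (f J) := by
        rw [hc, max_eq_right (le_min hba.le hbg.le)]
      have hcg : c ≤ f J := hcm ▸ min_le_right _ _
      have hbc' : u J1 < c := by rw [hcm]; exact lt_min hba hbg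
      have h2 : |f J1 - c| < |f J1 - u J1| := by
        rw [abs_of_nonneg (by linarith), abs_of_nonneg (by linarith)]
        linarith
      refine ⟨?_, h2.le, Or.inr h2⟩
      rcases le_or_gt (f J) (u J) with hga | hag
      · rw [hcm, min_eq_right hga]
        simp [abs_nonneg]
      · exact le_of_eq (by rw [hcm, min_eq_left hag.le])
  -- the competitor
  set v : Fin k → ℝ := fun m => if m = J ∨ m = J1 then c else u m with hv
  have hvJ : v J = c := by simp [hv]
  have hvJ1 : v J1 = c := by simp [hv]
  have hvne : ∀ m : Fin k, m ≠ J → m ≠ J1 → v m = u m := by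
    intro m h1 h2; simp [hv, h1, h2]
  have hpJ1 : pred J1 = J := Fin.ext (show j + 1 - 1 = j by omega)
  -- the fidelity term strictly decreases
  have hFid : ∑ m : Fin k, L m * |f m - v m| ^ p < ∑ m : Fin k, L m * |f m - u m| ^ p := by
    have hsub : ({J, J1} : Finset (Fin k)) ⊆ Finset.univ := Finset.subset_univ _
    rw [← Finset.sum_sdiff hsub, ← Finset.sum_sdiff hsub]
    have heq : ∑ m ∈ Finset.univ \ {J, J1}, L m * |f m - v m| ^ p
        = ∑ m ∈ Finset.univ \ {J, J1}, L m * |f m - u m| ^ p := by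
      refine Finset.sum_congr rfl fun m hm => ?_
      simp only [Finset.mem_sdiff, Finset.mem_insert, Finset.mem_singleton] at hm
      push_neg at hm
      rw [hvne m hm.2.1 hm.2.2]
    rw [heq]
    apply add_lt_add_right
    rw [Finset.sum_pair hJJ1, Finset.sum_pair hJJ1, hvJ, hvJ1]
    rcases habs.2.2 with hs | hs
    · apply add_lt_add_of_lt_of_le
      · exact mul_lt_mul_of_pos_left
          (Real.rpow_lt_rpow (abs_nonneg _) hs (by linarith)) (hL J)
      · exact mul_le_mul_of_nonneg_left
          (Real.rpow_le_rpow (abs_nonneg _) habs.2.1 (by linarith)) (hL J1).le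
    · apply add_lt_add_of_le_of_lt
      · exact mul_le_mul_of_nonneg_left
          (Real.rpow_le_rpow (abs_nonneg _) habs.1 (by linarith)) (hL J).le
      · exact mul_lt_mul_of_pos_left
          (Real.rpow_lt_rpow (abs_nonneg _) hs (by linarith)) (hL J1)
  -- the TV term does not increase
  have hbJ : (if J.val = 0 then (0:ℝ) else |v J - v (pred J)|)
      ≤ (if J.val = 0 then (0:ℝ) else |u J - u (pred J)|) + (u J - c) := by
    by_cases hj0 : j = 0
    · rw [hJval, if_pos hj0, if_pos hj0]
      linarith
    · rw [hJval, if_neg hj0, if_neg hj0]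
      have e2 : v (pred J) = u (pred J) :=
        hvne _ (Fin.ne_of_val_ne (show j - 1 ≠ j by omega))
          (Fin.ne_of_val_ne (show j - 1 ≠ j + 1 by omega))
      rw [hvJ, e2]
      have tri : |c - u (pred J)| ≤ |c - u J| + |u J - u (pred J)| := abs_sub_le _ _ _
      have hce : |c - u J| = u J - c := by
        rw [abs_of_nonpos (by linarith)]; ring
      linarith
  have hbJ1v : (if J1.val = 0 then (0:ℝ) else |v J1 - v (pred J1)|) = 0 := by
    rw [hJ1val, if_neg (Nat.succ_ne_zero j), hpJ1, hvJ1, hvJ, sub_self, abs_zero]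
  have hbJ1u : (if J1.val = 0 then (0:ℝ) else |u J1 - u (pred J1)|) = u J - u J1 := by
    rw [hJ1val, if_neg (Nat.succ_ne_zero j), hpJ1, abs_of_nonpos (by linarith)]
    ring
  have hTV : ∑ m : Fin k, (if m.val = 0 then (0:ℝ) else |v m - v (pred m)|)
      ≤ ∑ m : Fin k, (if m.val = 0 then (0:ℝ) else |u m - u (pred m)|) := by
    rcases lt_or_ge (j + 2) k with h2 | h2
    · set J2 : Fin k := ⟨j + 2, h2⟩ with hJ2def
      have hJ2val : J2.val = j + 2 := rfl
      have hpJ2 : pred J2 = J1 := Fin.ext (show j + 2 - 1 = j + 1 by omega)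
      have hJm : J ∉ ({J1, J2} : Finset (Fin k)) := by
        simp only [Finset.mem_insert, Finset.mem_singleton]
        push_neg
        exact ⟨Fin.ne_of_val_ne (by omega), Fin.ne_of_val_ne (by omega)⟩
      have hJ1m : J1 ∉ ({J2} : Finset (Fin k)) := by
        simp only [Finset.mem_singleton]
        exact Fin.ne_of_val_ne (by omega)
      have hsub : ({J, J1, J2} : Finset (Fin k)) ⊆ Finset.univ := Finset.subset_univ _
      rw [← Finset.sum_sdiff hsub, ← Finset.sum_sdiff hsub]
      have heq : ∑ m ∈ Finset.univ \ {J, J1, J2},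
            (if m.val = 0 then (0:ℝ) else |v m - v (pred m)|)
          = ∑ m ∈ Finset.univ \ {J, J1, J2},
            (if m.val = 0 then (0:ℝ) else |u m - u (pred m)|) := by
        refine Finset.sum_congr rfl fun m hm => ?_
        simp only [Finset.mem_sdiff, Finset.mem_insert, Finset.mem_singleton] at hm
        push_neg at hm
        obtain ⟨-, hm1, hm2, hm3⟩ := hm
        have hv1 : m.val ≠ j := fun hh => hm1 (Fin.ext hh)
        have hv2 : m.val ≠ j + 1 := fun hh => hm2 (Fin.ext hh)
        have hv3 : m.val ≠ j + 2 := fun hh => hm3 (Fin.ext hh)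
        have e1 : v m = u m := hvne m hm1 hm2
        have e2 : v (pred m) = u (pred m) :=
          hvne _ (Fin.ne_of_val_ne (show m.val - 1 ≠ j by omega))
            (Fin.ne_of_val_ne (show m.val - 1 ≠ j + 1 by omega))
        rw [e1, e2]
      rw [heq]
      apply add_le_add_right
      rw [Finset.sum_insert hJm, Finset.sum_insert hJ1m, Finset.sum_singleton,
        Finset.sum_insert hJm, Finset.sum_insert hJ1m, Finset.sum_singleton]
      -- bound for the J2 term
      have hbJ2 : (if J2.val = 0 then (0:ℝ) else |v J2 - v (pred J2)|)
          ≤ (if J2.val = 0 then (0:ℝ) else |u J2 - u (pred J2)|) + (c - u J1) := by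
        rw [hJ2val, if_neg (by omega), if_neg (by omega), hpJ2, hvJ1,
          hvne J2 (Fin.ne_of_val_ne (by omega)) (Fin.ne_of_val_ne (by omega))]
        have tri : |u J2 - c| ≤ |u J2 - u J1| + |u J1 - c| := abs_sub_le _ _ _
        have hce : |u J1 - c| = c - u J1 := by
          rw [abs_of_nonpos (by linarith)]; ring
        linarith
      linarith [hbJ, hbJ1v, hbJ1u, hbJ2]
    · have hsub : ({J, J1} : Finset (Fin k)) ⊆ Finset.univ := Finset.subset_univ _
      rw [← Finset.sum_sdiff hsub, ← Finset.sum_sdiff hsub]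
      have heq : ∑ m ∈ Finset.univ \ {J, J1},
            (if m.val = 0 then (0:ℝ) else |v m - v (pred m)|)
          = ∑ m ∈ Finset.univ \ {J, J1},
            (if m.val = 0 then (0:ℝ) else |u m - u (pred m)|) := by
        refine Finset.sum_congr rfl fun m hm => ?_
        simp only [Finset.mem_sdiff, Finset.mem_insert, Finset.mem_singleton] at hm
        push_neg at hm
        obtain ⟨-, hm1, hm2⟩ := hm
        have hv1 : m.val ≠ j := fun hh => hm1 (Fin.ext hh)
        have hv2 : m.val ≠ j + 1 := fun hh => hm2 (Fin.ext hh)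
        have hmk : m.val < k := m.isLt
        have e1 : v m = u m := hvne m hm1 hm2
        have e2 : v (pred m) = u (pred m) :=
          hvne _ (Fin.ne_of_val_ne (show m.val - 1 ≠ j by omega))
            (Fin.ne_of_val_ne (show m.val - 1 ≠ j + 1 by omega))
        rw [e1, e2]
      rw [heq]
      apply add_le_add_right
      rw [Finset.sum_pair hJJ1, Finset.sum_pair hJJ1]
      linarith [hbJ, hbJ1v, hbJ1u]
  -- conclude
  have hGlt : G k lam p L f v < G k lam p L f u := by
    unfold G
    have hmul : lam * ∑ m : Fin k, L m * |f m - v m| ^ p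
        < lam * ∑ m : Fin k, L m * |f m - u m| ^ p :=
      mul_lt_mul_of_pos_left hFid hlam
    linarith
  exact absurd (hu v) (not_le.mpr hGlt)
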